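/- Let A be an associative unital ℂ-algebra, N a natural number, and γ : Fin N → A a family satisfying γ a * γ b = −(γ b * γ a) for all a ≠ b. Let l be a duplicate-free list of elements of Fin N with length k, let J₀ be the product (in order) of γ over l, and suppose c is a complex number such that J := c • J₀ satisfies J * J = 1. Then for every index b ∈ Fin N: if b occurs in l, then (−1)^{k+1} • (J * γ b * J) = γ b, and if b does not occur in l, then (−1)^{k+1} • (J * γ b * J) = −(γ b). -/

import Mathlib

private lemma prod_mul_gamma_not_mem
    {A : Type*} [Ring A] [Algebra ℂ A] {N : ℕ} (γ : Fin N → A)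
    (hanti : ∀ a b : Fin N, a ≠ b → γ a * γ b = -(γ b * γ a)) :
    ∀ (l : List (Fin N)) (b : Fin N), b ∉ l →
      (l.map γ).prod * γ b = ((-1 : ℂ) ^ l.length) • (γ b * (l.map γ).prod) := by
  intro l
  induction l with
  | nil => intro b _; simp
  | cons a t ih =>
    intro b hb
    have hab : a ≠ b := fun h => hb (h ▸ (List.mem_cons_self : a ∈ a :: t))
    have hbt : b ∉ t := fun h => hb (List.mem_cons_of_mem a h)
    simp only [List.map_cons, List.prod_cons, List.length_cons]
    rw [mul_assoc, ih b hbt, mul_smul_comm, ← mul_assoc, hanti a b hab]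
    rw [pow_succ]
    simp [smul_smul, mul_comm, mul_assoc]

private lemma prod_mul_gamma_mem
    {A : Type*} [Ring A] [Algebra ℂ A] {N : ℕ} (γ : Fin N → A)
    (hanti : ∀ a b : Fin N, a ≠ b → γ a * γ b = -(γ b * γ a)) :
    ∀ (l : List (Fin N)) (b : Fin N), l.Nodup → b ∈ l →
      (l.map γ).prod * γ b = ((-1 : ℂ) ^ (l.length + 1)) • (γ b * (l.map γ).prod) := by
  intro l
  induction l with
  | nil => intro b _ hb; simp at hb
  | cons a t ih =>
    intro b hnd hb
    have hand := List.nodup_cons.mp hnd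
    simp only [List.map_cons, List.prod_cons, List.length_cons]
    rcases List.mem_cons.mp hb with h | h
    · subst h
      have hbt : b ∉ t := hand.1
      rw [mul_assoc, prod_mul_gamma_not_mem γ hanti t b hbt, mul_smul_comm, ← mul_assoc]
      congr 1
      rw [pow_succ, pow_succ]
      ring
    · have hab : a ≠ b := fun he => hand.1 (he ▸ h)
      rw [mul_assoc, ih b hand.2 h, mul_smul_comm, ← mul_assoc, hanti a b hab]
      rw [pow_succ (n := t.length + 1)]
      simp [smul_smul, mul_comm, mul_assoc]

/-- Let `A` be an associative unital `ℂ`-algebra and `γ : Fin N → A` a family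
of pairwise anticommuting elements. Let `l` be a duplicate-free list in `Fin N` of length `k`,
`J₀` the ordered product of `γ` over `l`, and `c : ℂ` with `J := c • J₀` satisfying `J * J = 1`.
Then for every `b : Fin N`: if `b ∈ l` then `(−1)^{k+1} • (J * γ b * J) = γ b`, and if `b ∉ l`
then `(−1)^{k+1} • (J * γ b * J) = −(γ b)`. -/
theorem reflection_by_fundamental_symmetry
    {A : Type*} [Ring A] [Algebra ℂ A] {N : ℕ} (γ : Fin N → A)
    (hanti : ∀ a b : Fin N, a ≠ b → γ a * γ b = -(γ b * γ a))
    (l : List (Fin N)) (hl : l.Nodup) (c : ℂ)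
    (hJ : (c • (l.map γ).prod) * (c • (l.map γ).prod) = 1) :
    ∀ b : Fin N,
      (b ∈ l →
        ((-1 : ℂ) ^ (l.length + 1)) • ((c • (l.map γ).prod) * γ b * (c • (l.map γ).prod)) =
          γ b) ∧
      (b ∉ l →
        ((-1 : ℂ) ^ (l.length + 1)) • ((c • (l.map γ).prod) * γ b * (c • (l.map γ).prod)) =
          -(γ b)) := by
  intro b
  set P := (l.map γ).prod with hP
  have hJ' : (c * c) • (P * P) = 1 := by
    rw [← smul_mul_smul_comm]; exact hJ
  constructor
  · intro hb
    have h1 := prod_mul_gamma_mem γ hanti l b hl hb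
    calc ((-1 : ℂ) ^ (l.length + 1)) • ((c • P) * γ b * (c • P))
        = ((-1 : ℂ) ^ (l.length + 1)) • ((c * c) • (P * γ b * P)) := by
          rw [smul_mul_assoc, mul_smul_comm, smul_mul_assoc, smul_smul,
            smul_smul, smul_smul, mul_assoc]
      _ = ((-1 : ℂ) ^ (l.length + 1)) • ((c * c) •
            (((-1 : ℂ) ^ (l.length + 1)) • (γ b * (P * P)))) := by
          rw [← mul_assoc, h1, smul_mul_assoc, mul_assoc]
      _ = γ b * ((c * c) • (P * P)) := by
          rw [smul_smul, smul_smul, mul_smul_comm]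
          congr 1
          have h2 : ((-1:ℂ)^(l.length+1)) * ((-1:ℂ)^(l.length+1)) = 1 := by
            rw [← pow_add, ← two_mul, pow_mul]; norm_num
          linear_combination (c*c) * h2
      _ = γ b := by rw [hJ', mul_one]
  · intro hb
    have h1 := prod_mul_gamma_not_mem γ hanti l b hb
    calc ((-1 : ℂ) ^ (l.length + 1)) • ((c • P) * γ b * (c • P))
        = ((-1 : ℂ) ^ (l.length + 1)) • ((c * c) • (P * γ b * P)) := by
          rw [smul_mul_assoc, mul_smul_comm, smul_mul_assoc, smul_smul,
            smul_smul, smul_smul, mul_assoc]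
      _ = ((-1 : ℂ) ^ (l.length + 1)) • ((c * c) •
            (((-1 : ℂ) ^ l.length) • (γ b * (P * P)))) := by
          rw [← mul_assoc, h1, smul_mul_assoc, mul_assoc]
      _ = (-1 : ℂ) • (γ b * ((c * c) • (P * P))) := by
          rw [smul_smul, smul_smul, mul_smul_comm, smul_smul]
          congr 1
          have h2 : ((-1:ℂ)^(l.length+1)) * ((-1:ℂ)^l.length) = -1 := by
            rw [← pow_add, show l.length + 1 + l.length = 2 * l.length + 1 by ring,
              pow_succ, pow_mul]
            norm_num
          linear_combination (c*c) * h2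
      _ = -(γ b) := by rw [hJ', mul_one, neg_smul, one_smul]
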